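/- arXiv:2211.13598 — 4 statements merged into one kernel-verified Lean document; each statement's English description precedes it below -/
import Mathlib

section
/- For d ≥ 2 and T_d the degree-d Chebyshev polynomial characterized by T_d(x + x⁻¹) = x^d + x^{-d}, if ζ is a root of unity then the group G_∞(T_d, ζ + ζ⁻¹) is abelian; more precisely, every iterated preimage of ζ + ζ⁻¹ under T_d over Q is of the form η + η⁻¹ for some root of unity η, and hence lies in Q^ab. -/
open Polynomial

/-- `x : ℂ` lies in the maximal abelian extension `ℚ^ab` of `ℚ`. -/
def InQab (x : ℂ) : Prop :=
  ∃ F : IntermediateField ℚ ℂ, x ∈ F ∧ IsGalois ℚ F ∧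
    ∀ σ τ : F ≃ₐ[ℚ] F, σ * τ = τ * σ

/-- Every complex number can be written as `w + w⁻¹`. -/
lemma cheb_exists_w (x : ℂ) : ∃ w : ℂ, w ≠ 0 ∧ x = w + w⁻¹ := by
  have hdeg : (0 : WithBot ℕ) < (X ^ 2 - C x * X + 1 : ℂ[X]).degree := by
    have h2 : (X ^ 2 - C x * X + 1 : ℂ[X]).degree = 2 := by
      compute_degree!
    rw [h2]; norm_num
  obtain ⟨w, hw⟩ := Complex.exists_root hdeg
  have hw' : w ^ 2 - x * w + 1 = 0 := by simpa [IsRoot] using hw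
  have hw0 : w ≠ 0 := by rintro rfl; simp at hw'
  refine ⟨w, hw0, ?_⟩
  field_simp
  linear_combination -hw'

lemma cheb_eq_or (a b : ℂ) (ha : a ≠ 0) (hb : b ≠ 0) (h : a + a⁻¹ = b + b⁻¹) :
    a = b ∨ a = b⁻¹ := by
  have key : (a - b) * (a * b - 1) = (a + a⁻¹ - (b + b⁻¹)) * (a * b) := by
    field_simp; ring
  rw [h, sub_self, zero_mul] at key
  rcases mul_eq_zero.1 key with h1 | h1
  · exact Or.inl (sub_eq_zero.1 h1)
  · refine Or.inr ?_
    field_simp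
    linear_combination h1

lemma cheb_dickson_eval (a : ℂ) (ha : a ≠ 0) (m : ℕ) :
    aeval (a + a⁻¹) (dickson 1 (1 : ℚ) m) = a ^ m + (a ^ m)⁻¹ := by
  rw [aeval_def, ← eval_map, map_dickson]
  have := dickson_one_one_eval_add_inv a a⁻¹ (mul_inv_cancel₀ ha) m
  simpa [inv_pow, map_one] using this

lemma cheb_inQab (η : ℂ) (m : ℕ) (hm : 1 ≤ m) (hη : η ^ m = 1) : InQab (η + η⁻¹) := by
  have hfin : IsOfFinOrder η := isOfFinOrder_iff_pow_eq_one.2 ⟨m, by omega, hη⟩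
  have hk : 0 < orderOf η := hfin.orderOf_pos
  have hprim : IsPrimitiveRoot η (orderOf η) := IsPrimitiveRoot.orderOf η
  set n : ℕ+ := ⟨orderOf η, hk⟩ with hn
  have hprim' : IsPrimitiveRoot η (n : ℕ) := hprim
  have hη0 : η ≠ 0 := hprim.ne_zero hk.ne'
  have hint : IsIntegral ℚ η :=
    ⟨X ^ (n : ℕ) - 1, monic_X_pow_sub_C _ (by positivity), by
      simp [hprim'.pow_eq_one, sub_eq_zero]⟩
  set F : IntermediateField ℚ ℂ := IntermediateField.adjoin ℚ {η} with hF
  have hsub : F.toSubalgebra = Algebra.adjoin ℚ ({η} : Set ℂ) :=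
    IntermediateField.adjoin_simple_toSubalgebra_of_isAlgebraic hint.isAlgebraic
  have e : (Algebra.adjoin ℚ ({η} : Set ℂ)) ≃ₐ[ℚ] F :=
    Subalgebra.equivOfEq _ _ hsub.symm
  haveI hcyc : IsCyclotomicExtension {(n : ℕ)} ℚ F :=
    IsCyclotomicExtension.equiv _ ℚ _ e (h := hprim'.adjoin_isCyclotomicExtension ℚ)
  haveI : IsGalois ℚ F := IsCyclotomicExtension.isGalois {(n : ℕ)} ℚ F
  have hmem : η + η⁻¹ ∈ F := by
    have h1 : η ∈ F := IntermediateField.mem_adjoin_simple_self ℚ η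
    exact add_mem h1 (inv_mem h1)
  exact ⟨F, hmem, inferInstance,
    fun σ τ => (IsCyclotomicExtension.isMulCommutative {(n : ℕ)} ℚ F).is_comm.comm σ τ⟩

lemma cheb_comm_aux (Kf : IntermediateField ℚ ℂ) (σ τ : Kf ≃ₐ[ℚ] Kf)
    (x : Kf) (η : ℂ) (k : ℕ) (hk : 0 < k) (hprim : IsPrimitiveRoot η k)
    (hx : algebraMap Kf ℂ x = η + η⁻¹) : σ (τ x) = τ (σ x) := by
  haveI : NeZero k := ⟨hk.ne'⟩
  have hη0 : η ≠ 0 := hprim.ne_zero hk.ne'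
  have hinj : Function.Injective (algebraMap Kf ℂ) := (algebraMap Kf ℂ).injective
  set p : ℚ[X] := dickson 1 (1 : ℚ) k - C 2 with hp
  have hroot : aeval x p = 0 := by
    apply hinj
    rw [map_zero, ← aeval_algebraMap_apply, hx, hp, map_sub, aeval_C,
      cheb_dickson_eval η hη0 k, hprim.pow_eq_one]
    norm_num
  have key : ∀ υ : Kf ≃ₐ[ℚ] Kf, ∃ a : ℕ, algebraMap Kf ℂ (υ x) = η ^ a + (η ^ a)⁻¹ := by
    intro υ
    have h2 : aeval (υ x) p = 0 := by
      rw [aeval_algHom_apply υ x p]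
      simp [hroot]
    have h3 : aeval (algebraMap Kf ℂ (υ x)) p = 0 := by
      rw [aeval_algebraMap_apply, h2, map_zero]
    obtain ⟨w, hw0, hwe⟩ := cheb_exists_w (algebraMap Kf ℂ (υ x))
    rw [hwe, hp, map_sub, aeval_C, cheb_dickson_eval w hw0 k, sub_eq_zero] at h3
    have h4 : w ^ k + (w ^ k)⁻¹ = 1 + 1⁻¹ := by
      rw [h3]; norm_num
    have h5 : w ^ k = 1 := by
      rcases cheb_eq_or _ _ (pow_ne_zero _ hw0) one_ne_zero h4 with h | h
      · exact h
      · simpa using h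
    obtain ⟨a, _, ha⟩ := hprim.eq_pow_of_pow_eq_one h5
    exact ⟨a, by rw [hwe, ha]⟩
  have form : ∀ (υ : Kf ≃ₐ[ℚ] Kf) (c : ℕ), algebraMap Kf ℂ (υ x) = η ^ c + (η ^ c)⁻¹ →
      υ x = aeval x (dickson 1 (1 : ℚ) c) := by
    intro υ c h
    apply hinj
    rw [h, ← aeval_algebraMap_apply, hx, cheb_dickson_eval η hη0 c]
  have hcomm : ∀ (υ₁ υ₂ : Kf ≃ₐ[ℚ] Kf) (a b : ℕ),
      algebraMap Kf ℂ (υ₁ x) = η ^ a + (η ^ a)⁻¹ →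
      algebraMap Kf ℂ (υ₂ x) = η ^ b + (η ^ b)⁻¹ →
      algebraMap Kf ℂ (υ₁ (υ₂ x)) = η ^ (a * b) + (η ^ (a * b))⁻¹ := by
    intro υ₁ υ₂ a b h1 h2
    rw [form υ₂ b h2, ← aeval_algHom_apply υ₁ x _,
      ← aeval_algebraMap_apply, h1, cheb_dickson_eval (η ^ a) (pow_ne_zero _ hη0) b,
      ← pow_mul]
  obtain ⟨a, ha⟩ := key σ
  obtain ⟨b, hb⟩ := key τ
  apply hinj
  rw [hcomm σ τ a b ha hb, hcomm τ σ b a hb ha, mul_comm]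

lemma cheb_preimage (d : ℕ) (hd : 2 ≤ d) (T : ℚ[X])
    (hT : ∀ x : ℂ, x ≠ 0 → aeval (x + x⁻¹) T = x ^ d + (x⁻¹) ^ d)
    (ζ : ℂ) (hζ : ∃ m : ℕ, 1 ≤ m ∧ ζ ^ m = 1) :
    ∀ (n : ℕ) (γ : ℂ), (fun z : ℂ => aeval z T)^[n] γ = ζ + ζ⁻¹ →
      ∃ η : ℂ, (∃ m : ℕ, 1 ≤ m ∧ η ^ m = 1) ∧ γ = η + η⁻¹ := by
  intro n
  induction n with
  | zero =>
    intro γ h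
    exact ⟨ζ, hζ, by simpa using h⟩
  | succ n ih =>
    intro γ h
    rw [Function.iterate_succ_apply] at h
    obtain ⟨η, ⟨m, hm, hηm⟩, heq⟩ := ih (aeval γ T) h
    have hη0 : η ≠ 0 := by
      rintro rfl
      rw [zero_pow (by omega)] at hηm
      exact one_ne_zero hηm.symm
    obtain ⟨w, hw0, hwe⟩ := cheb_exists_w γ
    have hTe : aeval γ T = w ^ d + (w ^ d)⁻¹ := by
      rw [hwe, hT w hw0, inv_pow]
    rw [hTe] at heq
    have hcase := cheb_eq_or _ _ (pow_ne_zero _ hw0) hη0 heq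
    refine ⟨w, ⟨d * m, Nat.one_le_iff_ne_zero.mpr (Nat.mul_ne_zero (by omega) (by omega)), ?_⟩,
      hwe⟩
    rcases hcase with h1 | h1
    · rw [pow_mul, h1, hηm]
    · rw [pow_mul, h1, inv_pow, hηm, inv_one]

/-- Let `T` be the degree-`d` Chebyshev polynomial (`d ≥ 2`), characterized by
`T(x + x⁻¹) = x^d + x^{-d}`. If `ζ` is a root of unity, then every iterated preimage of
`ζ + ζ⁻¹` under `T` is of the form `η + η⁻¹` for a root of unity `η`, hence lies in `ℚ^ab`,
and the dynamical Galois group `G_∞(T, ζ + ζ⁻¹)` over `ℚ` is abelian. -/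
theorem chebyshev_abelian_arboreal (d : ℕ) (hd : 2 ≤ d) (T : ℚ[X])
    (hTdeg : T.natDegree = d)
    (hT : ∀ x : ℂ, x ≠ 0 → aeval (x + x⁻¹) T = x ^ d + (x⁻¹) ^ d)
    (ζ : ℂ) (hζ : ∃ m : ℕ, 1 ≤ m ∧ ζ ^ m = 1) :
    (∀ γ : ℂ, (∃ n : ℕ, (fun z : ℂ => aeval z T)^[n] γ = ζ + ζ⁻¹) →
      (∃ η : ℂ, (∃ m : ℕ, 1 ≤ m ∧ η ^ m = 1) ∧ γ = η + η⁻¹) ∧ InQab γ) ∧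
    (∀ σ τ : (IntermediateField.adjoin ℚ
        {γ : ℂ | ∃ n : ℕ, (fun z : ℂ => aeval z T)^[n] γ = ζ + ζ⁻¹}) ≃ₐ[ℚ]
        (IntermediateField.adjoin ℚ
        {γ : ℂ | ∃ n : ℕ, (fun z : ℂ => aeval z T)^[n] γ = ζ + ζ⁻¹}),
      σ * τ = τ * σ) := by
  have main := cheb_preimage d hd T hT ζ hζ
  constructor
  · rintro γ ⟨n, hn⟩
    obtain ⟨η, ⟨m, hm, hηm⟩, hγ⟩ := main n γ hn
    exact ⟨⟨η, ⟨m, hm, hηm⟩, hγ⟩, hγ ▸ cheb_inQab η m hm hηm⟩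
  · intro σ τ
    apply AlgEquiv.ext
    rintro ⟨z, hz⟩
    rw [AlgEquiv.mul_apply, AlgEquiv.mul_apply]
    induction hz using IntermediateField.adjoin_induction with
    | mem γ hγS =>
      obtain ⟨n, hn⟩ := hγS
      obtain ⟨η, ⟨m, hm, hηm⟩, hγeq⟩ := main n γ hn
      have hfin : IsOfFinOrder η := isOfFinOrder_iff_pow_eq_one.2 ⟨m, by omega, hηm⟩
      exact cheb_comm_aux _ σ τ _ η (orderOf η) hfin.orderOf_pos
        (IsPrimitiveRoot.orderOf η) (by simpa using hγeq)
    | algebraMap r =>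
      have h : (⟨algebraMap ℚ ℂ r, IntermediateField.algebraMap_mem _ r⟩ :
          IntermediateField.adjoin ℚ
            {γ : ℂ | ∃ n : ℕ, (fun z : ℂ => aeval z T)^[n] γ = ζ + ζ⁻¹}) =
          algebraMap ℚ _ r := rfl
      rw [h]
      simp
    | add u v hu hv ihu ihv =>
      have h : (⟨u + v, add_mem hu hv⟩ :
          IntermediateField.adjoin ℚ
            {γ : ℂ | ∃ n : ℕ, (fun z : ℂ => aeval z T)^[n] γ = ζ + ζ⁻¹}) =
          ⟨u, hu⟩ + ⟨v, hv⟩ := rfl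
      rw [h, map_add, map_add, ihu, ihv, map_add, map_add]
    | inv u hu ihu =>
      have h : (⟨u⁻¹, inv_mem hu⟩ :
          IntermediateField.adjoin ℚ
            {γ : ℂ | ∃ n : ℕ, (fun z : ℂ => aeval z T)^[n] γ = ζ + ζ⁻¹}) =
          (⟨u, hu⟩ : IntermediateField.adjoin ℚ
            {γ : ℂ | ∃ n : ℕ, (fun z : ℂ => aeval z T)^[n] γ = ζ + ζ⁻¹})⁻¹ := rfl
      rw [h, map_inv₀, map_inv₀, ihu, map_inv₀, map_inv₀]
    | mul u v hu hv ihu ihv =>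
      have h : (⟨u * v, mul_mem hu hv⟩ :
          IntermediateField.adjoin ℚ
            {γ : ℂ | ∃ n : ℕ, (fun z : ℂ => aeval z T)^[n] γ = ζ + ζ⁻¹}) =
          ⟨u, hu⟩ * ⟨v, hv⟩ := rfl
      rw [h, map_mul, map_mul, ihu, ihv, map_mul, map_mul]
end

section
/- Let Ω be the automorphism group of the infinite rooted binary tree, φ_n : Ω → F_2 the level-parity homomorphisms, and ψ : Ω → ∏_{n≥1} F_2 given by ψ(σ) = (φ_1(σ), φ_2(σ), ...). If σ, τ ∈ Ω satisfy φ_1(σ) = 1 and ψ(σ), ψ(τ) are linearly independent over F_2 in ∏_{n≥1} F_2, then σ and τ do not commute. -/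
def IsTreeAut (σ : Equiv.Perm (List Bool)) : Prop :=
  σ [] = [] ∧ ∀ (s : List Bool) (b : Bool), ∃ b' : Bool, σ (s ++ [b]) = σ s ++ [b']

def swapBit (σ : Equiv.Perm (List Bool)) (v : List Bool) : ZMod 2 :=
  if σ (v ++ [false]) = σ v ++ [false] then 0 else 1

def phiLevel (n : ℕ) (σ : Equiv.Perm (List Bool)) : ZMod 2 :=
  ∑ v : Fin (n - 1) → Bool, swapBit σ (List.ofFn v)

def psiMap (σ : Equiv.Perm (List Bool)) : ℕ → ZMod 2 :=
  fun n => phiLevel (n + 1) σ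

namespace TreeAux

/-- the swap bit as a boolean -/
def bitAt (g : Equiv.Perm (List Bool)) (s : List Bool) : Bool :=
  decide (g (s ++ [false]) ≠ g s ++ [false])

lemma apply_append {g : Equiv.Perm (List Bool)} (hg : IsTreeAut g) (s : List Bool) (b : Bool) :
    g (s ++ [b]) = g s ++ [xor b (bitAt g s)] := by
  obtain ⟨b0, hb0⟩ := hg.2 s false
  have hbit : bitAt g s = b0 := by
    cases b0 <;> simp [bitAt, hb0]
  cases b with
  | false => simpa [hbit] using hb0
  | true =>
    obtain ⟨b1, hb1⟩ := hg.2 s true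
    have hne : b1 ≠ b0 := by
      intro h
      have := g.injective (hb1.trans (h ▸ hb0.symm))
      simp at this
    rw [hb1, hbit]
    cases b0 <;> cases b1 <;> simp_all

lemma swapBit_eq {g : Equiv.Perm (List Bool)} (hg : IsTreeAut g) (v : List Bool) :
    swapBit g v = if bitAt g v = true then 1 else 0 := by
  have h := apply_append hg v false
  unfold swapBit
  cases hb : bitAt g v <;> rw [hb] at h <;> simp [h]

lemma length_apply {g : Equiv.Perm (List Bool)} (hg : IsTreeAut g) (s : List Bool) :
    (g s).length = s.length := by
  induction s using List.reverseRecOn with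
  | nil => simp [hg.1]
  | append_singleton l b ih => rw [apply_append hg]; simp [ih]

lemma apply_cons {g : Equiv.Perm (List Bool)} (hg : IsTreeAut g) (b : Bool) (l : List Bool) :
    g (b :: l) = xor b (bitAt g []) :: (g (b :: l)).tail := by
  induction l using List.reverseRecOn with
  | nil =>
    have := apply_append hg [] b
    simp [hg.1] at this
    simp [this]
  | append_singleton l x ih =>
    have h : (b :: (l ++ [x])) = (b :: l) ++ [x] := by simp
    rw [h, apply_append hg, ih]
    simp

lemma swapBit_mul {σ τ : Equiv.Perm (List Bool)} (hσ : IsTreeAut σ) (hτ : IsTreeAut τ)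
    (v : List Bool) :
    swapBit (σ * τ) v = swapBit σ (τ v) + swapBit τ v := by
  have h1 : (σ * τ) (v ++ [false]) = σ (τ v) ++ [xor (xor false (bitAt τ v)) (bitAt σ (τ v))] := by
    rw [Equiv.Perm.mul_apply, apply_append hτ, apply_append hσ]
  rw [swapBit_eq hσ, swapBit_eq hτ]
  unfold swapBit
  rw [h1, Equiv.Perm.mul_apply]
  cases hb : bitAt τ v <;> cases hb' : bitAt σ (τ v) <;> simp <;> decide

lemma mul_isTreeAut {σ τ : Equiv.Perm (List Bool)} (hσ : IsTreeAut σ) (hτ : IsTreeAut τ) :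
    IsTreeAut (σ * τ) := by
  constructor
  · simp [Equiv.Perm.mul_apply, hτ.1, hσ.1]
  · intro s b
    refine ⟨xor (xor b (bitAt τ s)) (bitAt σ (τ s)), ?_⟩
    simp [Equiv.Perm.mul_apply, apply_append hτ, apply_append hσ]

/-- the set of vertices at level `n` -/
def levelSet (n : ℕ) : Finset (List Bool) :=
  Finset.univ.image (fun v : Fin n → Bool => List.ofFn v)

lemma mem_levelSet {n : ℕ} {l : List Bool} : l ∈ levelSet n ↔ l.length = n := by
  simp only [levelSet, Finset.mem_image, Finset.mem_univ, true_and]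
  constructor
  · rintro ⟨v, rfl⟩; simp
  · intro h
    refine ⟨fun i => l.get (Fin.cast h.symm i), ?_⟩
    apply List.ext_getElem (by simp [h])
    intro i h1 h2
    simp

lemma phiLevel_eq_sum (n : ℕ) (g : Equiv.Perm (List Bool)) :
    phiLevel n g = ∑ l ∈ levelSet (n - 1), swapBit g l := by
  rw [levelSet, Finset.sum_image (fun x _ y _ h => List.ofFn_injective h)]
  rfl

lemma image_levelSet {g : Equiv.Perm (List Bool)} (hg : IsTreeAut g) (n : ℕ) :
    (levelSet n).image (fun l => g l) = levelSet n := by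
  apply Finset.eq_of_subset_of_card_le
  · intro l hl
    obtain ⟨x, hx, rfl⟩ := Finset.mem_image.mp hl
    rw [mem_levelSet, length_apply hg, ← mem_levelSet]; exact hx
  · rw [Finset.card_image_of_injective _ g.injective]

lemma sum_levelSet_comp {g : Equiv.Perm (List Bool)} (hg : IsTreeAut g)
    (f : List Bool → ZMod 2) (n : ℕ) :
    ∑ l ∈ levelSet n, f (g l) = ∑ l ∈ levelSet n, f l := by
  conv_rhs => rw [← image_levelSet hg n]
  rw [Finset.sum_image (fun x _ y _ h => g.injective h)]

lemma sum_cons_comp {g : Equiv.Perm (List Bool)} (hg : IsTreeAut g)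
    (f : List Bool → ZMod 2) (n : ℕ) (b : Bool) :
    ∑ l ∈ levelSet n, f (g (b :: l)) = ∑ l ∈ levelSet n, f (xor b (bitAt g []) :: l) := by
  have key : ∀ l, g (b :: l) = xor b (bitAt g []) :: (g (b :: l)).tail :=
    fun l => apply_cons hg b l
  have hinj : ∀ x ∈ levelSet n, ∀ y ∈ levelSet n,
      (g (b :: x)).tail = (g (b :: y)).tail → x = y := by
    intro x _ y _ h
    have : g (b :: x) = g (b :: y) := by rw [key x, key y, h]
    have := g.injective this
    simpa using this
  have himg : (levelSet n).image (fun l => (g (b :: l)).tail) = levelSet n := by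
    apply Finset.eq_of_subset_of_card_le
    · intro l hl
      obtain ⟨x, hx, rfl⟩ := Finset.mem_image.mp hl
      rw [mem_levelSet]
      have hlen : (g (b :: x)).length = x.length + 1 := by
        rw [length_apply hg]; simp
      rw [List.length_tail, hlen]
      simpa using mem_levelSet.mp hx
    · rw [Finset.card_image_of_injOn hinj]
  calc ∑ l ∈ levelSet n, f (g (b :: l))
      = ∑ l ∈ levelSet n, f (xor b (bitAt g []) :: (g (b :: l)).tail) := by
        apply Finset.sum_congr rfl; intro l _; rw [← key l]
    _ = ∑ t ∈ (levelSet n).image (fun l => (g (b :: l)).tail), f (xor b (bitAt g []) :: t) := by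
        rw [Finset.sum_image hinj]
    _ = ∑ l ∈ levelSet n, f (xor b (bitAt g []) :: l) := by rw [himg]

lemma sum_level_succ (F : List Bool → ZMod 2) (m : ℕ) :
    ∑ l ∈ levelSet (m + 1), F l
      = (∑ l ∈ levelSet m, F (false :: l)) + ∑ l ∈ levelSet m, F (true :: l) := by
  have h1 : ∑ l ∈ levelSet (m + 1), F l = ∑ v : Fin (m + 1) → Bool, F (List.ofFn v) := by
    rw [levelSet, Finset.sum_image (fun x _ y _ h => List.ofFn_injective h)]
  have h2 : ∀ b : Bool, ∑ l ∈ levelSet m, F (b :: l) = ∑ w : Fin m → Bool, F (b :: List.ofFn w) := by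
    intro b
    rw [levelSet, Finset.sum_image (fun x _ y _ h => List.ofFn_injective h)]
  rw [h1, h2, h2]
  rw [← (Fin.consEquiv (fun _ : Fin (m+1) => Bool)).sum_comp (fun v => F (List.ofFn v))]
  rw [Fintype.sum_prod_type, Fintype.sum_bool]
  simp only [Fin.consEquiv_apply, List.ofFn_succ, Fin.cons_zero, Fin.cons_succ]
  rw [add_comm]

lemma phiLevel_mul {σ τ : Equiv.Perm (List Bool)} (hσ : IsTreeAut σ) (hτ : IsTreeAut τ)
    (n : ℕ) : phiLevel n (σ * τ) = phiLevel n σ + phiLevel n τ := by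
  rw [phiLevel_eq_sum, phiLevel_eq_sum, phiLevel_eq_sum]
  rw [← sum_levelSet_comp hτ (swapBit σ) (n - 1), ← Finset.sum_add_distrib]
  exact Finset.sum_congr rfl fun l _ => swapBit_mul hσ hτ l

lemma psi_vanish {σ τ : Equiv.Perm (List Bool)} (hσ : IsTreeAut σ) (hτ : IsTreeAut τ)
    (hc : σ * τ = τ * σ) (hbσ : bitAt σ [] = true) (hbτ : bitAt τ [] = false)
    (n : ℕ) : phiLevel (n + 1) τ = 0 := by
  cases n with
  | zero =>
    have : phiLevel 1 τ = swapBit τ [] := by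
      rw [phiLevel_eq_sum]
      have : levelSet 0 = {[]} := by
        ext l; rw [mem_levelSet]; simp [List.length_eq_zero_iff]
      rw [this, Finset.sum_singleton]
    rw [this, swapBit_eq hτ, hbτ]
    simp
  | succ m =>
    rw [phiLevel_eq_sum]
    have hm : (m + 1 + 1 - 1) = m + 1 := rfl
    rw [hm, sum_level_succ (swapBit τ) m]
    -- pointwise commuting relation
    have hpt : ∀ l : List Bool,
        swapBit σ (τ (false :: l)) + swapBit τ (false :: l)
          = swapBit τ (σ (false :: l)) + swapBit σ (false :: l) := by
      intro l
      have h1 := swapBit_mul hσ hτ (false :: l)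
      have h2 := swapBit_mul hτ hσ (false :: l)
      rw [hc] at h1
      rw [← h1, h2]
    have hsum := Finset.sum_congr rfl (fun l (_ : l ∈ levelSet m) => hpt l)
    rw [Finset.sum_add_distrib, Finset.sum_add_distrib] at hsum
    have e1 : ∑ l ∈ levelSet m, swapBit σ (τ (false :: l))
        = ∑ l ∈ levelSet m, swapBit σ (false :: l) := by
      have := sum_cons_comp hτ (swapBit σ) m false
      rwa [hbτ] at this
    have e2 : ∑ l ∈ levelSet m, swapBit τ (σ (false :: l))
        = ∑ l ∈ levelSet m, swapBit τ (true :: l) := by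
      have := sum_cons_comp hσ (swapBit τ) m false
      rwa [hbσ] at this
    rw [e1, e2] at hsum
    have heq : ∑ l ∈ levelSet m, swapBit τ (false :: l)
        = ∑ l ∈ levelSet m, swapBit τ (true :: l) := by
      have := hsum
      rw [add_comm] at this
      exact add_right_cancel this
    rw [heq]
    exact CharTwo.add_self_eq_zero _

end TreeAux

open TreeAux in
/-- If `σ, τ` are automorphisms of the infinite rooted binary tree with `φ_1(σ) = 1` and
`ψ(σ), ψ(τ)` linearly independent over `𝔽₂` in `∏_{n ≥ 1} 𝔽₂`, then `σ` and `τ` do not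
commute. -/
theorem not_commute_of_linearIndependent (σ τ : Equiv.Perm (List Bool))
    (hσ : IsTreeAut σ) (hτ : IsTreeAut τ) (h1 : phiLevel 1 σ = 1)
    (hind : LinearIndependent (ZMod 2) ![psiMap σ, psiMap τ]) :
    σ * τ ≠ τ * σ := by
  intro hc
  -- σ swaps the root
  have hφ1 : phiLevel 1 σ = swapBit σ [] := by
    rw [phiLevel_eq_sum]
    have : levelSet 0 = {[]} := by
      ext l; rw [mem_levelSet]; simp [List.length_eq_zero_iff]
    rw [this, Finset.sum_singleton]
  have hbσ : bitAt σ [] = true := by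
    by_contra h
    have h' : bitAt σ [] = false := by simpa using h
    rw [hφ1, swapBit_eq hσ, h'] at h1
    simp at h1
  cases hbτ : bitAt τ [] with
  | false =>
    -- then ψ(τ) = 0
    have hzero : psiMap τ = 0 := by
      funext n
      exact psi_vanish hσ hτ hc hbσ hbτ n
    have := hind.ne_zero 1
    rw [Matrix.cons_val_one, Matrix.cons_val_zero] at this
    exact this hzero
  | true =>
    -- then ψ(σ) + ψ(τ) = 0
    have hρ : IsTreeAut (σ * τ) := mul_isTreeAut hσ hτ
    have hcρ : σ * (σ * τ) = (σ * τ) * σ := by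
      rw [mul_assoc, ← hc]
    have hbρ : bitAt (σ * τ) [] = false := by
      have happ : (σ * τ) ([] ++ [false]) = (σ * τ) [] ++ [xor false (bitAt (σ * τ) [])] :=
        apply_append hρ [] false
      have hcomp : (σ * τ) ([] ++ [false]) = σ (τ ([] ++ [false])) := rfl
      rw [apply_append hτ, hτ.1, apply_append hσ, hσ.1, hbτ] at hcomp
      rw [hcomp, hρ.1, hbσ] at happ
      cases h : bitAt (σ * τ) [] with
      | false => rfl
      | true => rw [h] at happ; simp at happ
    have hsum : psiMap σ + psiMap τ = 0 := by
      funext n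
      have hv := psi_vanish hσ hρ hcρ hbσ hbρ n
      rw [phiLevel_mul hσ hτ] at hv
      exact hv
    have hli := Fintype.linearIndependent_iff.mp hind ![1, 1]
    have : ∑ i : Fin 2, (![1, 1] : Fin 2 → ZMod 2) i • ![psiMap σ, psiMap τ] i = 0 := by
      rw [Fin.sum_univ_two]
      simp only [Matrix.cons_val_zero, Matrix.cons_val_one, Matrix.head_cons, one_smul]
      exact hsum
    have h0 := hli this 0
    simp at h0
end

section
/- The dynamical Galois group G_3(x² − 1, −1/2) over Q is non-abelian; equivalently, the Galois group of the splitting field of (x²−1)∘(x²−1)∘(x²−1) + 1/2 over Q is not abelian. -/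
open Polynomial

noncomputable section G3Aux

def qZ : ℤ[X] := X^8 + C (-8 : ℤ) * X^4 + C 8 * X^2 + C (-2)

def Pq : ℚ[X] :=
  ((X ^ 2 - 1 : ℚ[X]).comp (X ^ 2 - 1)).comp (X ^ 2 - 1) + C (1/2 : ℚ)

lemma qZ_monic : qZ.Monic := by unfold qZ; monicity!

lemma qZ_natDegree : qZ.natDegree = 8 := by unfold qZ; compute_degree!

lemma qZ_irred : Irreducible qZ := by
  have he : qZ.IsEisensteinAt (Ideal.span {(2 : ℤ)}) := by
    apply qZ_monic.isEisensteinAt_of_mem_of_notMem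
    · rw [Ideal.ne_top_iff_one, Ideal.mem_span_singleton]; decide
    · intro n hn
      rw [qZ_natDegree] at hn
      unfold qZ
      interval_cases n <;>
        simp [coeff_X_pow, coeff_C, Ideal.mem_span_singleton] <;> decide
    · unfold qZ
      rw [Ideal.span_singleton_pow]
      simp [coeff_X_pow, coeff_C, Ideal.mem_span_singleton]
  exact he.irreducible (Ideal.span_singleton_prime (by norm_num) |>.mpr Int.prime_two)
    qZ_monic.isPrimitive (by rw [qZ_natDegree]; norm_num)

lemma qQ_irred : Irreducible (qZ.map (Int.castRingHom ℚ)) :=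
  (IsPrimitive.Int.irreducible_iff_irreducible_map_cast qZ_monic.isPrimitive).mp qZ_irred

lemma Pq_eq : Pq = X^8 + C (-4 : ℚ) * X^6 + C 4 * X^4 + C (-(1/2)) := by
  have h : (C (1/2 : ℚ)) + C (1/2 : ℚ) = 1 := by rw [← C_add]; norm_num
  unfold Pq
  simp only [sub_comp, pow_comp, X_comp, one_comp, map_neg, map_ofNat]
  linear_combination h

lemma Pq_natDegree : Pq.natDegree = 8 := by rw [Pq_eq]; compute_degree!

lemma Pq_ne_zero : Pq ≠ 0 := fun h => by
  have hnd := Pq_natDegree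
  rw [h] at hnd
  simp at hnd

lemma Pq_coeff_zero : Pq.coeff 0 = -(1/2) := by
  rw [Pq_eq]; simp [coeff_X_pow, coeff_C]

lemma qQ_eq : qZ.map (Int.castRingHom ℚ) = X^8 + C (-8 : ℚ) * X^4 + C 8 * X^2 + C (-2) := by
  unfold qZ
  simp only [Polynomial.map_add, Polynomial.map_mul, Polynomial.map_pow, Polynomial.map_X,
    Polynomial.map_C, map_neg, map_ofNat, Polynomial.map_neg, Polynomial.map_ofNat]

lemma Pq_reverse : Pq.reverse = C (-(1/2) : ℚ) * qZ.map (Int.castRingHom ℚ) := by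
  rw [reverse, Pq_natDegree, qQ_eq]
  nth_rewrite 1 [Pq_eq]
  rw [show (C (-(1/2):ℚ)) = C (-(1/2):ℚ) * X^0 by ring]
  simp only [reflect_add, reflect_C_mul_X_pow, reflect_monomial]
  norm_num [revAt_le]
  have h1 : C (1/2:ℚ) * C 8 = C 4 := by rw [← C_mul]; norm_num
  have h2 : C (1/2:ℚ) * C 2 = 1 := by rw [← C_mul]; norm_num
  linear_combination (X^2 - (X:ℚ[X])^4) * h1 - h2

lemma Pq_reverse_irred : Irreducible Pq.reverse := by
  have hu : IsUnit (C (-(1/2) : ℚ)) := isUnit_C.mpr (by norm_num)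
  have : Associated (qZ.map (Int.castRingHom ℚ)) Pq.reverse :=
    ⟨hu.unit, by rw [IsUnit.unit_spec, mul_comm, ← Pq_reverse]⟩
  exact this.irreducible qQ_irred

lemma Pq_irred : Irreducible Pq := by
  constructor
  · exact fun h => by
      have := natDegree_eq_zero_of_isUnit h
      rw [Pq_natDegree] at this; exact absurd this (by norm_num)
  · intro a b hab
    have hc : a.coeff 0 * b.coeff 0 = -(1/2) := by
      rw [← mul_coeff_zero, ← hab, Pq_coeff_zero]
    have ha0 : a.coeff 0 ≠ 0 := fun h => by simp [h] at hc
    have hb0 : b.coeff 0 ≠ 0 := fun h => by simp [h] at hc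
    have hrev : Pq.reverse = a.reverse * b.reverse := by
      rw [hab, reverse_mul_of_domain]
    rcases (Pq_reverse_irred.isUnit_or_isUnit hrev) with h | h
    · left
      have hd : a.natDegree = 0 := by
        have h1 := natDegree_eq_zero_of_isUnit h
        have h2 : a.natTrailingDegree = 0 := natTrailingDegree_eq_zero.mpr (Or.inr ha0)
        rw [a.natDegree_eq_reverse_natDegree_add_natTrailingDegree, h1, h2]
      rw [eq_C_of_natDegree_eq_zero hd]
      exact isUnit_C.mpr (isUnit_iff_ne_zero.mpr ha0)
    · right
      have hd : b.natDegree = 0 := by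
        have h1 := natDegree_eq_zero_of_isUnit h
        have h2 : b.natTrailingDegree = 0 := natTrailingDegree_eq_zero.mpr (Or.inr hb0)
        rw [b.natDegree_eq_reverse_natDegree_add_natTrailingDegree, h1, h2]
      rw [eq_C_of_natDegree_eq_zero hd]
      exact isUnit_C.mpr (isUnit_iff_ne_zero.mpr hb0)

lemma Pq_aeval {A : Type*} [Field A] [CharZero A] (x : A) :
    (aeval x) Pq = x^8 - 4*x^6 + 4*x^4 - 1/2 := by
  have : (algebraMap ℚ A) = (Rat.castHom A) := by
    ext1 r; exact (map_ratCast (algebraMap ℚ A) r).symm ▸ by simp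
  simp only [Pq_eq, map_add, map_mul, map_pow, aeval_X, aeval_C, this, map_neg, map_ofNat,
    map_div₀, map_one]
  ring

lemma exists_real_root : ∃ x : ℝ, (aeval x) Pq = 0 := by
  have hc : ContinuousOn (fun x : ℝ => x^8 - 4*x^6 + 4*x^4 - 1/2) (Set.Icc 0 2) := by fun_prop
  have h := intermediate_value_Icc (by norm_num : (0:ℝ) ≤ 2) hc
  have h0 : (0:ℝ) ∈ Set.Icc ((fun x : ℝ => x^8 - 4*x^6 + 4*x^4 - 1/2) 0)
      ((fun x : ℝ => x^8 - 4*x^6 + 4*x^4 - 1/2) 2) := by norm_num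
  obtain ⟨x, _, hx⟩ := h h0
  exact ⟨x, by rw [Pq_aeval]; exact hx⟩

lemma exists_im_root : ∃ t : ℝ, t ≠ 0 ∧ (aeval ((t:ℂ) * Complex.I)) Pq = 0 := by
  have hc : ContinuousOn (fun t : ℝ => t^8 + 4*t^6 + 4*t^4 - 1/2) (Set.Icc 0 1) := by fun_prop
  have h := intermediate_value_Icc (by norm_num : (0:ℝ) ≤ 1) hc
  have h0 : (0:ℝ) ∈ Set.Icc ((fun t : ℝ => t^8 + 4*t^6 + 4*t^4 - 1/2) 0)
      ((fun t : ℝ => t^8 + 4*t^6 + 4*t^4 - 1/2) 1) := by norm_num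
  obtain ⟨t, _, ht⟩ := h h0
  simp only at ht
  refine ⟨t, ?_, ?_⟩
  · intro h0'
    rw [h0'] at ht; norm_num at ht
  · rw [Pq_aeval]
    have hI : ((t:ℂ) * Complex.I)^2 = -((t:ℂ))^2 := by
      rw [mul_pow, Complex.I_sq]; ring
    have : ((t:ℂ) * Complex.I)^8 - 4*((t:ℂ) * Complex.I)^6 + 4*((t:ℂ) * Complex.I)^4 - 1/2
        = ((t:ℂ)^8 + 4*(t:ℂ)^6 + 4*(t:ℂ)^4 - 1/2) := by
      rw [show ((t:ℂ) * Complex.I)^8 = (((t:ℂ) * Complex.I)^2)^4 by ring,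
        show ((t:ℂ) * Complex.I)^6 = (((t:ℂ) * Complex.I)^2)^3 by ring,
        show ((t:ℂ) * Complex.I)^4 = (((t:ℂ) * Complex.I)^2)^2 by ring, hI]
      ring
    rw [this, show ((t:ℂ)^8 + 4*(t:ℂ)^6 + 4*(t:ℂ)^4 - 1/2)
        = ((t^8 + 4*t^6 + 4*t^4 - 1/2 : ℝ) : ℂ) by push_cast; ring, ht, Complex.ofReal_zero]

end G3Aux

/-- The dynamical Galois group `G_3(x² − 1, −1/2)` over `ℚ`, i.e. the Galois group of the
splitting field of `f³(x) + 1/2` where `f = x² − 1`, is not abelian. -/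
theorem G3_xsq_sub_one_neg_half_not_abelian :
    ∃ σ τ : (((X ^ 2 - 1 : ℚ[X]).comp (X ^ 2 - 1)).comp (X ^ 2 - 1) + C (1/2 : ℚ)).Gal,
      σ * τ ≠ τ * σ := by
  show ∃ σ τ : Pq.Gal, σ * τ ≠ τ * σ
  haveI : Fact ((Pq.map (algebraMap ℚ ℂ)).Splits) := ⟨IsAlgClosed.splits _⟩
  by_contra hcon
  push_neg at hcon
  -- complex conjugation as an element of the Galois group
  set σ : Pq.Gal := Gal.restrict Pq ℂ (Complex.conjAe.restrictScalars ℚ) with hσ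
  obtain ⟨xr, hxr⟩ := exists_real_root
  obtain ⟨t, ht0, htr⟩ := exists_im_root
  have hrmem : ((xr : ℂ)) ∈ Pq.rootSet ℂ := by
    rw [mem_rootSet]
    refine ⟨Pq_ne_zero, ?_⟩
    rw [Pq_aeval] at hxr
    rw [Pq_aeval, show ((xr:ℂ)^8 - 4*(xr:ℂ)^6 + 4*(xr:ℂ)^4 - 1/2)
        = ((xr^8 - 4*xr^6 + 4*xr^4 - 1/2 : ℝ) : ℂ) by push_cast; ring, hxr, Complex.ofReal_zero]
  have hzmem : ((t:ℂ) * Complex.I) ∈ Pq.rootSet ℂ :=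
    (mem_rootSet).mpr ⟨Pq_ne_zero, htr⟩
  set r : Pq.rootSet ℂ := ⟨_, hrmem⟩ with hr
  set z : Pq.rootSet ℂ := ⟨_, hzmem⟩ with hz
  haveI := Gal.galAction_isPretransitive Pq ℂ Pq_irred
  obtain ⟨τ, hτ⟩ := MulAction.exists_smul_eq Pq.Gal r z
  have h1 : σ • r = r := by
    apply Subtype.ext
    rw [hσ, Gal.restrict_smul]
    simp [hr, Complex.conj_ofReal]
  have h2 : σ • z = z := by
    rw [← hτ, ← mul_smul, hcon σ τ, mul_smul, h1]
  have h3 : (starRingEnd ℂ) ((t:ℂ) * Complex.I) = (t:ℂ) * Complex.I := by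
    have := congrArg Subtype.val h2
    rwa [hσ, Gal.restrict_smul] at this
  rw [Complex.conj_eq_iff_im] at h3
  simp [Complex.mul_im] at h3
  exact ht0 h3
end

section
/- Let K be a number field, φ = f/g ∈ K(x) with f, g coprime polynomials and deg f > deg g + 1, and α ∈ K. Then there exists a real constant H > 0 such that every algebraic number γ with φ^n(γ) = α for some n ≥ 1 satisfies |σ(γ)| ≤ H for every embedding σ of Q(γ) into C; i.e., the houses of all elements of the backward orbit of α are uniformly bounded. -/
open Polynomial
open scoped IntermediateField

/-- `γ` is an `n`-fold preimage of `w` under the rational map `φ = f/g` over `ℂ`: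
there is a chain `w = z_0, z_1, …, z_n = γ` with `φ(z_{k+1}) = z_k`, where `φ(z) = w`
is encoded as `f(z) = w · g(z)` (for `f, g` coprime this is equivalent, since they have
no common root). -/
def IsIteratedPreimage (f g : ℂ[X]) (w : ℂ) (n : ℕ) (γ : ℂ) : Prop :=
  ∃ z : ℕ → ℂ, z 0 = w ∧ z n = γ ∧
    ∀ k : ℕ, k < n → (f.eval (z (k + 1)) = z k * g.eval (z (k + 1)))

/-- Polynomial evaluation upper bound for `‖z‖ ≥ 1`. -/
lemma aux_upper (p : ℂ[X]) : ∃ C : ℝ, 0 ≤ C ∧ ∀ (d : ℕ), p.natDegree ≤ d →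
    ∀ z : ℂ, 1 ≤ ‖z‖ → ‖p.eval z‖ ≤ C * ‖z‖ ^ d := by
  refine ⟨∑ i ∈ Finset.range (p.natDegree + 1), ‖p.coeff i‖,
    Finset.sum_nonneg fun _ _ => norm_nonneg _, fun d hd z hz => ?_⟩
  rw [Polynomial.eval_eq_sum_range, Finset.sum_mul]
  refine (norm_sum_le _ _).trans (Finset.sum_le_sum fun i hi => ?_)
  rw [norm_mul, norm_pow]
  have hi' : i ≤ d := by
    have := Finset.mem_range.mp hi; omega
  exact mul_le_mul_of_nonneg_left (pow_le_pow_right₀ hz hi') (norm_nonneg _)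

/-- Escape estimate: beyond some radius, `‖f(z)‖ > ‖z‖·‖g(z)‖` when `deg f > deg g + 1`. -/
lemma aux_escape (p q : ℂ[X]) (hdeg : q.natDegree + 1 < p.natDegree) :
    ∃ R : ℝ, 1 ≤ R ∧ ∀ z : ℂ, R ≤ ‖z‖ → ‖z‖ * ‖q.eval z‖ < ‖p.eval z‖ := by
  have hp0 : p ≠ 0 := fun h => by simp [h] at hdeg
  obtain ⟨Cq, hCq0, hCq⟩ := aux_upper q
  obtain ⟨Ce, hCe0, hCe⟩ := aux_upper p.eraseLead
  set l := ‖p.leadingCoeff‖ with hl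
  have hl0 : 0 < l := norm_pos_iff.mpr (leadingCoeff_ne_zero.mpr hp0)
  refine ⟨max 1 ((Cq + Ce + 1)/l), le_max_left _ _, fun z hz => ?_⟩
  have hz1 : 1 ≤ ‖z‖ := le_trans (le_max_left _ _) hz
  have hzl : Cq + Ce + 1 ≤ l * ‖z‖ := by
    have := le_trans (le_max_right _ _) hz
    calc Cq + Ce + 1 = ((Cq + Ce + 1)/l) * l := by field_simp
    _ ≤ ‖z‖ * l := by
        apply mul_le_mul_of_nonneg_right this hl0.le
    _ = l * ‖z‖ := mul_comm _ _
  set n := p.natDegree with hn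
  have hn2 : 2 ≤ n := by omega
  have hpow : ‖z‖ ^ n = ‖z‖ * ‖z‖ ^ (n-1) := by
    rw [← pow_succ']; congr 1; omega
  have hpow2 : ‖z‖ ^ (n-1) = ‖z‖ ^ (n-2) * ‖z‖ := by
    rw [← pow_succ]; congr 1; omega
  have hppos : (0:ℝ) < ‖z‖ ^ (n-1) := pow_pos (by linarith) _
  have hpone : (1:ℝ) ≤ ‖z‖ ^ (n-1) := one_le_pow₀ hz1
  have key1 : ‖z‖ * ‖q.eval z‖ ≤ Cq * ‖z‖ ^ (n-1) := by
    have h1 := hCq (n-2) (by omega) z hz1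
    calc ‖z‖ * ‖q.eval z‖ ≤ ‖z‖ * (Cq * ‖z‖ ^ (n-2)) := by
          exact mul_le_mul_of_nonneg_left h1 (norm_nonneg _)
    _ = Cq * ‖z‖ ^ (n-1) := by rw [hpow2]; ring
  have key2 : l * ‖z‖ ^ n - Ce * ‖z‖ ^ (n-1) ≤ ‖p.eval z‖ := by
    have hsplit : p.eval z = p.eraseLead.eval z + p.leadingCoeff * z ^ n := by
      conv_lhs => rw [← p.eraseLead_add_C_mul_X_pow]
      rw [eval_add, eval_mul, eval_C, eval_pow, eval_X]
    have h2 := hCe (n-1) (by have := p.eraseLead_natDegree_le; omega) z hz1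
    have h3 : ‖p.leadingCoeff * z ^ n‖ - ‖p.eraseLead.eval z‖ ≤ ‖p.eval z‖ := by
      have := norm_sub_norm_le (p.leadingCoeff * z ^ n) (-(p.eraseLead.eval z))
      rw [norm_neg, sub_neg_eq_add] at this
      calc ‖p.leadingCoeff * z ^ n‖ - ‖p.eraseLead.eval z‖ ≤
          ‖p.leadingCoeff * z ^ n + p.eraseLead.eval z‖ := this
      _ = ‖p.eval z‖ := by rw [hsplit, add_comm]
    rw [norm_mul, norm_pow] at h3
    linarith
  have mid : Cq * ‖z‖ ^ (n-1) < l * ‖z‖ ^ n - Ce * ‖z‖ ^ (n-1) := by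
    rw [hpow]
    nlinarith
  linarith

/-- All elements of a preimage chain of `w` are uniformly bounded. -/
lemma chain_bound (p q : ℂ[X]) (hcop : IsCoprime p q)
    (hdeg : q.natDegree + 1 < p.natDegree) (w : ℂ) :
    ∃ R : ℝ, 0 < R ∧ ∀ (n : ℕ) (γ : ℂ), IsIteratedPreimage p q w n γ → ‖γ‖ ≤ R := by
  obtain ⟨R, hR1, hR⟩ := aux_escape p q hdeg
  refine ⟨max R ‖w‖, lt_of_lt_of_le one_pos (le_trans hR1 (le_max_left _ _)),
    fun n γ ⟨z, hz0, hzn, hrel⟩ => ?_⟩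
  have main : ∀ k, k ≤ n → ‖z k‖ ≤ max R ‖w‖ := by
    intro k
    induction k with
    | zero => intro _; rw [hz0]; exact le_max_right _ _
    | succ k ih =>
      intro hk
      by_contra hgt
      push_neg at hgt
      have hRz : R ≤ ‖z (k+1)‖ := le_trans (le_max_left _ _) hgt.le
      have hlt := hR _ hRz
      have hrel' := hrel k (by omega)
      have hq0 : q.eval (z (k+1)) ≠ 0 := by
        intro h0
        obtain ⟨a, b, hab⟩ := hcop
        have hp0 : p.eval (z (k+1)) = 0 := by rw [hrel', h0, mul_zero]
        have := congrArg (Polynomial.eval (z (k+1))) hab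
        simp [hp0, h0] at this
      rw [hrel', norm_mul] at hlt
      have hqpos : 0 < ‖q.eval (z (k+1))‖ := norm_pos_iff.mpr hq0
      have h2 : ‖z (k+1)‖ < ‖z k‖ := (mul_lt_mul_iff_left₀ hqpos).mp hlt
      exact absurd (ih (by omega)) (not_le.mpr (lt_trans hgt h2))
  rw [← hzn]
  exact main n le_rfl

/-- Pushing a polynomial evaluation through a ring homomorphism. -/
lemma map_eval_map {R S T : Type*} [CommSemiring R] [CommSemiring S] [CommSemiring T]
    (φ : R →+* S) (ψ : S →+* T) (p : R[X]) (x : S) :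
    ψ ((p.map φ).eval x) = (p.map (ψ.comp φ)).eval (ψ x) := by
  rw [← Polynomial.map_map]
  conv_rhs => rw [Polynomial.eval_map]
  rw [Polynomial.eval₂_at_apply]

set_option synthInstance.maxHeartbeats 1000000 in
set_option maxHeartbeats 1600000 in
/-- Any root of the minimal polynomial of an element of an algebraic extension of `ℚ`
inside `ℂ` is hit by some embedding. -/
lemma exists_conj_hom (M : IntermediateField ℚ ℂ) [Algebra.IsAlgebraic ℚ (↥M)]
    (x : ↥M) (γ' : ℂ) (h : (Polynomial.aeval γ') (minpoly ℚ x) = 0) :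
    ∃ σ : (↥M) →ₐ[ℚ] ℂ, σ x = γ' := by
  have hint : IsIntegral ℚ x := Algebra.IsIntegral.isIntegral x
  have hroot : γ' ∈ (minpoly ℚ x).aroots ℂ :=
    (Polynomial.mem_aroots).mpr ⟨minpoly.ne_zero hint, h⟩
  set σ0 := (IntermediateField.algHomAdjoinIntegralEquiv (K := ℂ) ℚ hint).symm ⟨γ', hroot⟩
    with hσ0def
  have hσ0 : σ0 (IntermediateField.AdjoinSimple.gen ℚ x) = γ' :=
    IntermediateField.algHomAdjoinIntegralEquiv_symm_apply_gen ℚ hint _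
  haveI : Algebra.IsAlgebraic (↥ℚ⟮x⟯) (↥M) :=
    Algebra.IsAlgebraic.tower_top (K := ℚ) (↥ℚ⟮x⟯)
  obtain ⟨σ, hσ⟩ :=
    IsAlgClosed.surjective_restrictDomain_of_isAlgebraic (K := ℚ) (L := ↥ℚ⟮x⟯)
      (E := ↥M) (M := ℂ) σ0
  refine ⟨σ, ?_⟩
  have h1 : (σ.restrictDomain ↥ℚ⟮x⟯) (IntermediateField.AdjoinSimple.gen ℚ x) = γ' := by
    rw [show AlgHom.restrictDomain (↥ℚ⟮x⟯) σ = σ0 from hσ]; exact hσ0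
  exact h1

set_option maxHeartbeats 1000000 in
set_option synthInstance.maxHeartbeats 400000 in
/-- Let `K` be a number field embedded in `ℂ`, `φ = f/g` with `f, g ∈ K[x]` coprime and
`deg f > deg g + 1`, and `α ∈ K`. Then the houses of the elements of the backward orbit
of `α` under `φ` are uniformly bounded: there is `H > 0` such that every `γ` with
`φ^n(γ) = α` for some `n ≥ 1` satisfies `|γ'| ≤ H` for every conjugate `γ'` of `γ` over
`ℚ` (i.e. for every embedding of `ℚ(γ)` into `ℂ`). -/
theorem house_bounded_on_backward_orbit (K : Type*) [Field K] [NumberField K]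
    (ι : K →+* ℂ) (f g : K[X]) (hcop : IsCoprime f g)
    (hdeg : g.natDegree + 1 < f.natDegree) (α : K) :
    ∃ H : ℝ, 0 < H ∧ ∀ (n : ℕ) (γ : ℂ), 1 ≤ n →
      IsIteratedPreimage (f.map ι) (g.map ι) (ι α) n γ →
      ∀ γ' : ℂ, minpoly ℚ γ' = minpoly ℚ γ → ‖γ'‖ ≤ H := by
  classical
  have hbound : ∀ τ : K →+* ℂ, ∃ R : ℝ, 0 < R ∧ ∀ (n : ℕ) (γ : ℂ),
      IsIteratedPreimage (f.map τ) (g.map τ) (τ α) n γ → ‖γ‖ ≤ R := by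
    intro τ
    refine chain_bound _ _ ?_ ?_ _
    · have := hcop.map (Polynomial.mapRingHom τ)
      simpa using this
    · rw [natDegree_map, natDegree_map]; exact hdeg
  choose R hRpos hR using hbound
  refine ⟨∑ τ : (K →+* ℂ), R τ, Finset.sum_pos (fun τ _ => hRpos τ) Finset.univ_nonempty,
    ?_⟩
  intro n γ hn hpre γ' hmin
  set M : IntermediateField ℚ ℂ := algebraicClosure ℚ ℂ with hM
  haveI : Algebra.IsIntegral ℚ M :=
    ⟨fun x => IntermediateField.isIntegral_iff.mpr (mem_algebraicClosure_iff'.mp x.2)⟩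
  haveI : Algebra.IsAlgebraic ℚ M := inferInstance
  have hKmem : ∀ x : K, ι x ∈ M := by
    intro x
    exact mem_algebraicClosure_iff'.mpr
      (IsIntegral.map ι.toRatAlgHom (Algebra.IsIntegral.isIntegral x))
  set ιM : K →+* M := ι.codRestrict M hKmem with hιM
  have hcompι : (algebraMap M ℂ).comp ιM = ι := RingHom.ext fun x => rfl
  obtain ⟨z, hz0, hzn, hrel⟩ := hpre
  -- all chain elements are algebraic numbers
  have hmem : ∀ k, k ≤ n → z k ∈ M := by
    intro k
    induction k with
    | zero => intro _; rw [hz0]; exact hKmem α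
    | succ k ih =>
      intro hk
      have hk' : z k ∈ M := ih (by omega)
      have hrel' := hrel k (by omega)
      set ζ : M := ⟨z k, hk'⟩ with hζ
      set P : Polynomial M := f.map ιM - C ζ * g.map ιM with hP
      have hP0 : P ≠ 0 := by
        intro h
        have heq : f.map ιM = C ζ * g.map ιM := by
          have := sub_eq_zero.mp (hP ▸ h)
          exact this
        have h1 : (f.map ιM).natDegree = f.natDegree := natDegree_map ιM
        have h2 : (C ζ * g.map ιM).natDegree ≤ g.natDegree := by
          refine (natDegree_C_mul_le _ _).trans ?_
          rw [natDegree_map]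
        rw [heq] at h1
        omega
      have haev : (aeval (z (k+1))) P = 0 := by
        have hmap : P.map (algebraMap M ℂ) = f.map ι - C (z k) * g.map ι := by
          rw [hP, Polynomial.map_sub, Polynomial.map_mul, Polynomial.map_map,
            Polynomial.map_map, hcompι, Polynomial.map_C]
          rfl
        rw [aeval_def, ← Polynomial.eval_map, hmap]
        rw [eval_sub, eval_mul, eval_C, hrel', sub_self]
      have halg : IsAlgebraic M (z (k+1)) := ⟨P, hP0, haev⟩
      exact mem_algebraicClosure_iff'.mpr (isIntegral_trans _ halg.isIntegral)
  have hγM : γ ∈ M := hzn ▸ hmem n le_rfl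
  set γM : M := ⟨γ, hγM⟩ with hγMdef
  have hintγ : IsIntegral ℚ γM := Algebra.IsIntegral.isIntegral γM
  have hmapγ : algebraMap M ℂ γM = γ := rfl
  have hminγ : minpoly ℚ γM = minpoly ℚ γ := by
    rw [← hmapγ, minpoly.algebraMap_eq (algebraMap M ℂ).injective]
  have hroot : γ' ∈ (minpoly ℚ γM).aroots ℂ := by
    rw [Polynomial.mem_aroots]
    refine ⟨minpoly.ne_zero hintγ, ?_⟩
    rw [hminγ, ← hmin]
    exact minpoly.aeval ℚ γ'
  -- build an embedding of the algebraic numbers sending γ to γ'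
  obtain ⟨σ, hσγ⟩ := exists_conj_hom M γM γ' (by rw [hminγ, ← hmin]; exact minpoly.aeval ℚ γ')
  set ι' : K →+* ℂ := σ.toRingHom.comp ιM with hι'
  -- the conjugated chain
  set ζc : ℕ → M := fun k => ⟨z (min k n), hmem _ (min_le_right _ _)⟩ with hζc
  have hζcoe : ∀ k, k ≤ n → algebraMap M ℂ (ζc k) = z k := by
    intro k hk
    show z (min k n) = z k
    rw [min_eq_left hk]
  have hrelM : ∀ k, k < n →
      (f.map ιM).eval (ζc (k+1)) = ζc k * (g.map ιM).eval (ζc (k+1)) := by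
    intro k hkn
    apply (algebraMap (↥M) ℂ).injective
    rw [map_mul, map_eval_map, map_eval_map, hcompι, hζcoe _ hkn.le,
      hζcoe _ (by omega : k + 1 ≤ n)]
    exact hrel k hkn
  have hpre' : IsIteratedPreimage (f.map ι') (g.map ι') (ι' α) n γ' := by
    refine ⟨fun k => σ (ζc k), ?_, ?_, ?_⟩
    · show σ (ζc 0) = ι' α
      have : ζc 0 = ιM α := by
        apply (algebraMap (↥M) ℂ).injective
        rw [hζcoe 0 (by omega)]
        exact hz0
      rw [this]; rfl
    · show σ (ζc n) = γ'
      have : ζc n = γM := by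
        apply (algebraMap (↥M) ℂ).injective
        rw [hζcoe n le_rfl, hmapγ]
        exact hzn
      rw [this]
      exact hσγ
    · intro k hkn
      show (f.map ι').eval (σ (ζc (k+1))) = σ (ζc k) * (g.map ι').eval (σ (ζc (k+1)))
      have h1 := congrArg σ (hrelM k hkn)
      rw [map_mul] at h1
      rw [show (σ : M → ℂ) = (σ.toRingHom : M → ℂ) from rfl] at h1 ⊢
      rw [map_eval_map ιM σ.toRingHom, map_eval_map ιM σ.toRingHom, ← hι'] at h1
      exact h1
  have hfin := hR ι' n γ' hpre'
  have : ‖γ'‖ ≤ ∑ τ : (K →+* ℂ), R τ := by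
    refine hfin.trans ?_
    exact Finset.single_le_sum (fun τ _ => (hRpos τ).le) (Finset.mem_univ ι')
  simpa using this
end
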